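/- Suppose L(W) = Σₙ exp(−yₙ fₙ(W)) with each fₙ positively homogeneous of degree K ≥ 1 and differentiable, and suppose W is a critical point of L that separates the data, i.e., yₙ fₙ(W) > 0 for all n. Then this leads to a contradiction: no finite critical point of the gradient separates the data. -/

import Mathlib

open Real

/-- Euler's identity for positively homogeneous differentiable functions. -/
lemma euler_identity {d K : ℕ} (g : EuclideanSpace ℝ (Fin d) → ℝ)
    (hg : Differentiable ℝ g)
    (hhom : ∀ l : ℝ, 0 < l → ∀ W, g (l • W) = l ^ K * g W)
    (W : EuclideanSpace ℝ (Fin d)) :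
    fderiv ℝ g W W = K * g W := by
  have h1 : HasDerivAt (fun l : ℝ => l • W) W 1 := by
    simpa using (hasDerivAt_id (1 : ℝ)).smul_const W
  have h2 : HasDerivAt (fun l : ℝ => g (l • W)) (fderiv ℝ g W W) 1 := by
    have := (hg.differentiableAt (x := (1 : ℝ) • W)).hasFDerivAt.comp_hasDerivAt 1 h1
    rw [one_smul] at this
    exact this
  have h3 : HasDerivAt (fun l : ℝ => l ^ K * g W) ((K : ℝ) * g W) 1 := by
    simpa using (hasDerivAt_pow K (1 : ℝ)).mul_const (g W)
  have heq : (fun l : ℝ => g (l • W)) =ᶠ[nhds (1 : ℝ)] fun l => l ^ K * g W := by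
    filter_upwards [eventually_gt_nhds (show (0:ℝ) < 1 by norm_num)] with l hl
    exact hhom l hl W
  have h4 : HasDerivAt (fun l : ℝ => g (l • W)) ((K : ℝ) * g W) 1 :=
    h3.congr_of_eventuallyEq heq
  exact h2.unique h4

/-- No finite critical point of the gradient of the exponential loss separates
the data. -/
theorem no_separating_critical_point {d N K : ℕ} (hN : 0 < N) (hK : 1 ≤ K)
    (f : Fin N → EuclideanSpace ℝ (Fin d) → ℝ)
    (hf : ∀ n, Differentiable ℝ (f n))
    (hhom : ∀ n, ∀ l : ℝ, 0 < l → ∀ W, f n (l • W) = l ^ K * f n W)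
    (y : Fin N → ℝ) (hy : ∀ n, y n = 1 ∨ y n = -1)
    (L : EuclideanSpace ℝ (Fin d) → ℝ)
    (hL : L = fun W => ∑ n, exp (-(y n * f n W)))
    (W : EuclideanSpace ℝ (Fin d))
    (hcrit : fderiv ℝ L W = 0)
    (hsep : ∀ n, 0 < y n * f n W) :
    False := by
  -- derivative of each summand
  have hterm : ∀ n, HasFDerivAt (fun W' => exp (-(y n * f n W')))
      (exp (-(y n * f n W)) • (-(y n • fderiv ℝ (f n) W))) W := by
    intro n
    have h0 : HasFDerivAt (f n) (fderiv ℝ (f n) W) W :=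
      (hf n).differentiableAt.hasFDerivAt
    have h1 : HasFDerivAt (fun W' => -(y n * f n W')) (-(y n • fderiv ℝ (f n) W)) W :=
      (h0.const_mul (y n)).neg
    exact h1.exp
  have hsum : HasFDerivAt L
      (∑ n, exp (-(y n * f n W)) • (-(y n • fderiv ℝ (f n) W))) W := by
    rw [hL]
    exact HasFDerivAt.fun_sum fun n _ => hterm n
  have hzero : (∑ n, exp (-(y n * f n W)) • (-(y n • fderiv ℝ (f n) W))) W = 0 := by
    rw [← hsum.fderiv, hcrit]; rfl
  have heval : ∀ n, (exp (-(y n * f n W)) • (-(y n • fderiv ℝ (f n) W))) W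
      = -(exp (-(y n * f n W)) * (y n * ((K : ℝ) * f n W))) := by
    intro n
    have := euler_identity (f n) (hf n) (hhom n) W
    simp [this]
  rw [ContinuousLinearMap.sum_apply] at hzero
  simp only [heval] at hzero
  have hneg : ∀ n ∈ Finset.univ (α := Fin N),
      -(exp (-(y n * f n W)) * (y n * ((K : ℝ) * f n W))) < 0 := by
    intro n _
    have hK0 : (0 : ℝ) < K := by exact_mod_cast lt_of_lt_of_le one_pos hK
    have h1 : 0 < y n * ((K : ℝ) * f n W) := by
      have := hsep n
      nlinarith
    nlinarith [exp_pos (-(y n * f n W))]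
  have : (∑ n, -(exp (-(y n * f n W)) * (y n * ((K : ℝ) * f n W)))) < 0 :=
    Finset.sum_neg hneg (Finset.univ_nonempty_iff.mpr ⟨⟨0, hN⟩⟩)
  linarith [this, hzero.le, hzero.ge]
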